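/- Conservation law for self-similarly shrinking curves: let I ⊆ ℝ be an interval and R, ψ : ℝ → ℝ be differentiable on I with R(s) > 0 and 0 < ψ(s) < π for all s ∈ I, satisfying the Abresch–Langer ODE system R′(s) = cos(ψ(s)) and ψ′(s) = (R(s) − 1/R(s))·sin(ψ(s)) on I. Then the function s ↦ exp((R(s)² − 1)/2) / (R(s)·sin(ψ(s))) is constant on I; i.e., K(R(s)) = c·sin(ψ(s)) on I for some constant c ≥ 1, where K(R) = exp((R²−1)/2)/R. -/

import Mathlib

open Real

noncomputable def K (R : ℝ) : ℝ := Real.exp ((R ^ 2 - 1) / 2) / R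

theorem stmt_2 (I : Set ℝ) (hI : I.OrdConnected) (R ψ : ℝ → ℝ)
    (hRpos : ∀ s ∈ I, 0 < R s)
    (hψpos : ∀ s ∈ I, 0 < ψ s) (hψlt : ∀ s ∈ I, ψ s < π)
    (hR' : ∀ s ∈ I, HasDerivAt R (Real.cos (ψ s)) s)
    (hψ' : ∀ s ∈ I, HasDerivAt ψ ((R s - 1 / R s) * Real.sin (ψ s)) s) :
    ∃ c : ℝ, 1 ≤ c ∧ ∀ s ∈ I, K (R s) = c * Real.sin (ψ s) := by
  -- handle empty I
  rcases Set.eq_empty_or_nonempty I with hIe | ⟨s₀, hs₀⟩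
  · exact ⟨1, le_refl 1, fun s hs => by simp [hIe] at hs⟩
  set F : ℝ → ℝ := fun s => Real.exp ((R s ^ 2 - 1) / 2) / (R s * Real.sin (ψ s)) with hF
  have hsin : ∀ s ∈ I, 0 < Real.sin (ψ s) := fun s hs =>
    Real.sin_pos_of_pos_of_lt_pi (hψpos s hs) (hψlt s hs)
  have hden : ∀ s ∈ I, R s * Real.sin (ψ s) ≠ 0 := fun s hs =>
    (mul_pos (hRpos s hs) (hsin s hs)).ne'
  have hFderiv : ∀ s ∈ I, HasDerivAt F 0 s := by
    intro s hs
    have hg : HasDerivAt (fun s => Real.exp ((R s ^ 2 - 1) / 2))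
        (Real.exp ((R s ^ 2 - 1) / 2) * ((2:ℕ) * R s ^ (2 - 1) * Real.cos (ψ s) / 2)) s :=
      (((((hR' s hs).pow 2).sub_const 1).div_const 2).exp)
    have hh : HasDerivAt (fun s => R s * Real.sin (ψ s))
        (Real.cos (ψ s) * Real.sin (ψ s) +
          R s * (Real.cos (ψ s) * ((R s - 1 / R s) * Real.sin (ψ s)))) s :=
      (hR' s hs).mul ((hψ' s hs).sin)
    have : HasDerivAt F _ s := hg.div hh (hden s hs)
    convert this using 1
    have hR0 : R s ≠ 0 := (hRpos s hs).ne'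
    have hS0 : Real.sin (ψ s) ≠ 0 := (hsin s hs).ne'
    field_simp
    ring
  have hconst : ∀ s ∈ I, F s = F s₀ := by
    intro s hs
    rcases le_total s s₀ with h | h
    · have hsub : Set.Icc s s₀ ⊆ I := hI.out hs hs₀
      exact (constant_of_has_deriv_right_zero
        (fun x hx => ((hFderiv x (hsub hx)).continuousAt).continuousWithinAt)
        (fun x hx => ((hFderiv x (hsub (Set.mem_Icc_of_Ico hx))).hasDerivWithinAt)) s₀
        (Set.right_mem_Icc.2 h)).symm ▸ rfl
    · have hsub : Set.Icc s₀ s ⊆ I := hI.out hs₀ hs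
      exact (constant_of_has_deriv_right_zero
        (fun x hx => ((hFderiv x (hsub hx)).continuousAt).continuousWithinAt)
        (fun x hx => ((hFderiv x (hsub (Set.mem_Icc_of_Ico hx))).hasDerivWithinAt)) s
        (Set.right_mem_Icc.2 h))
  refine ⟨F s₀, ?_, ?_⟩
  · -- F s₀ ≥ 1
    have hR0 := hRpos s₀ hs₀
    have hsin0 := hsin s₀ hs₀
    have hsin1 : Real.sin (ψ s₀) ≤ 1 := Real.sin_le_one _
    have hexp : R s₀ ≤ Real.exp ((R s₀ ^ 2 - 1) / 2) := by
      have h1 : Real.log (R s₀) ≤ R s₀ - 1 := Real.log_le_sub_one_of_pos hR0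
      have h2 : R s₀ - 1 ≤ (R s₀ ^ 2 - 1) / 2 := by nlinarith [sq_nonneg (R s₀ - 1)]
      calc R s₀ = Real.exp (Real.log (R s₀)) := (Real.exp_log hR0).symm
        _ ≤ Real.exp ((R s₀ ^ 2 - 1) / 2) := Real.exp_le_exp.2 (h1.trans h2)
    rw [hF]
    rw [le_div_iff₀ (mul_pos hR0 hsin0), one_mul]
    calc R s₀ * Real.sin (ψ s₀) ≤ R s₀ * 1 := by
          exact mul_le_mul_of_nonneg_left hsin1 hR0.le
      _ = R s₀ := mul_one _
      _ ≤ _ := hexp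
  · intro s hs
    have h1 := hconst s hs
    have hsin0 : Real.sin (ψ s) ≠ 0 := (hsin s hs).ne'
    have hR0 : R s ≠ 0 := (hRpos s hs).ne'
    simp only [K]
    rw [← h1]
    simp only [hF]
    field_simp
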